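/- Let d ≥ 2, 1 + 4/d < p < (d+2)/(d-2)^+, ω ∈ R, and suppose u ∈ H^1(R^d) is a nontrivial (weak) solution of Δu + |u|^{4/d} u − |u|^{p-1} u − ω u = 0 which satisfies the two Pohozaev-type identities ∫[(2d/(p+1)+2−d)|∇u|² + (d/(1+2/d) − 2d/(p+1))|u|^{2+4/d} + (2d/(p+1) − d)ω|u|²] dx = 0 and 2∫|∇u|² − (2d/(d+2))∫|u|^{2+4/d} + ((p−1)d/(p+1))∫|u|^{p+1} = 0. Then ω > 0. -/

import Mathlib

open MeasureTheory

/-- The (pointwise) Laplacian of a function on `ℝ^d`, as the trace of the second derivative. -/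
noncomputable def lapC {d : ℕ} (f : EuclideanSpace ℝ (Fin d) → ℂ)
    (x : EuclideanSpace ℝ (Fin d)) : ℂ :=
  ∑ i : Fin d, iteratedFDeriv ℝ 2 f x ![EuclideanSpace.single i 1, EuclideanSpace.single i 1]

/-- A nontrivial `H¹` solution of `Δu + |u|^{4/d}u − |u|^{p−1}u − ωu = 0` satisfying
the two Pohozaev-type identities has `ω > 0`. -/
theorem stmt_2 (d : ℕ) (hd : 2 ≤ d) (p ω : ℝ) (hp : 1 + 4 / (d : ℝ) < p)
    (hp2 : d = 2 ∨ p < ((d : ℝ) + 2) / ((d : ℝ) - 2))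
    (u : EuclideanSpace ℝ (Fin d) → ℂ)
    (hmem : MemLp u 2 volume)
    (hK : Integrable (fun x => ‖fderiv ℝ u x‖ ^ 2) volume)
    (hB : Integrable (fun x => ‖u x‖ ^ ((2 : ℝ) + 4 / (d : ℝ))) volume)
    (hP : Integrable (fun x => ‖u x‖ ^ (p + 1)) volume)
    (hne : ¬ (u =ᵐ[volume] 0))
    (hsol : ∀ x, lapC u x + (‖u x‖ ^ ((4 : ℝ) / (d : ℝ)) : ℝ) • u x
        - (‖u x‖ ^ (p - 1) : ℝ) • u x - (ω : ℂ) * u x = 0)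
    (poho1 : ∫ x, ((2 * (d : ℝ) / (p + 1) + 2 - (d : ℝ)) * ‖fderiv ℝ u x‖ ^ 2
        + ((d : ℝ) / (1 + 2 / (d : ℝ)) - 2 * (d : ℝ) / (p + 1)) * ‖u x‖ ^ ((2 : ℝ) + 4 / (d : ℝ))
        + (2 * (d : ℝ) / (p + 1) - (d : ℝ)) * ω * ‖u x‖ ^ 2) = 0)
    (poho2 : 2 * (∫ x, ‖fderiv ℝ u x‖ ^ 2)
        - (2 * (d : ℝ) / ((d : ℝ) + 2)) * (∫ x, ‖u x‖ ^ ((2 : ℝ) + 4 / (d : ℝ)))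
        + ((p - 1) * (d : ℝ) / (p + 1)) * (∫ x, ‖u x‖ ^ (p + 1)) = 0) :
    0 < ω := by
  have hd2 : (2 : ℝ) ≤ (d : ℝ) := by exact_mod_cast hd
  have hdpos : (0 : ℝ) < (d : ℝ) := by linarith
  have hp1 : (1 : ℝ) < p := by
    have h4 : (0 : ℝ) < 4 / (d : ℝ) := by positivity
    linarith
  have hP1 : (0 : ℝ) < p + 1 := by linarith
  -- integrability of |u|^2
  have hM : Integrable (fun x => ‖u x‖ ^ 2) volume := by
    have h := hmem.integrable_norm_rpow (by norm_num) (by norm_num)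
    have he : (2 : ENNReal).toReal = (2 : ℝ) := by norm_num
    refine h.congr (Filter.Eventually.of_forall fun x => ?_)
    rw [he]
    rw [show (2:ℝ) = ((2:ℕ):ℝ) from by norm_num]
    exact Real.rpow_natCast ‖u x‖ 2
  -- split the integral in poho1
  have hi1 : Integrable
      (fun x => (2 * (d : ℝ) / (p + 1) + 2 - (d : ℝ)) * ‖fderiv ℝ u x‖ ^ 2) volume :=
    hK.const_mul _
  have hi2 : Integrable (fun x => ((d : ℝ) / (1 + 2 / (d : ℝ)) - 2 * (d : ℝ) / (p + 1)) *
      ‖u x‖ ^ ((2 : ℝ) + 4 / (d : ℝ))) volume := hB.const_mul _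
  have hi3 : Integrable
      (fun x => (2 * (d : ℝ) / (p + 1) - (d : ℝ)) * ω * ‖u x‖ ^ 2) volume := hM.const_mul _
  have hi12 : Integrable (fun x => (2 * (d : ℝ) / (p + 1) + 2 - (d : ℝ)) * ‖fderiv ℝ u x‖ ^ 2
      + ((d : ℝ) / (1 + 2 / (d : ℝ)) - 2 * (d : ℝ) / (p + 1)) *
        ‖u x‖ ^ ((2 : ℝ) + 4 / (d : ℝ))) volume := hi1.add hi2
  rw [integral_add hi12 hi3, integral_add hi1 hi2, integral_const_mul,
    integral_const_mul, integral_const_mul] at poho1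
  set K := ∫ x, ‖fderiv ℝ u x‖ ^ 2 with hKdef
  set B := ∫ x, ‖u x‖ ^ ((2 : ℝ) + 4 / (d : ℝ)) with hBdef
  set M := ∫ x, ‖u x‖ ^ 2 with hMdef
  have hK0 : 0 ≤ K := integral_nonneg fun x => sq_nonneg _
  have hB0 : 0 ≤ B := integral_nonneg fun x => Real.rpow_nonneg (norm_nonneg _) _
  have hM0 : 0 ≤ M := integral_nonneg fun x => sq_nonneg _
  -- B > 0 since u is nontrivial
  have hBpos : 0 < B := by
    rcases hB0.lt_or_eq with h | h
    · exact h
    · exfalso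
      apply hne
      have hz := (integral_eq_zero_iff_of_nonneg
        (fun x => Real.rpow_nonneg (norm_nonneg _) _) hB).mp h.symm
      filter_upwards [hz] with x hx
      simp only [Pi.zero_apply] at hx ⊢
      have he : (2 : ℝ) + 4 / (d : ℝ) ≠ 0 := by positivity
      have := (Real.rpow_eq_zero (norm_nonneg _) he).mp hx
      exact norm_eq_zero.mp this
  -- sign of the coefficients
  have hdd3 : (d : ℝ) = 2 ∨ (3 : ℝ) ≤ (d : ℝ) := by
    rcases Nat.lt_or_ge d 3 with h | h
    · left; have : d = 2 := by omega
      rw [this]; norm_num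
    · right; exact_mod_cast h
  have hA1 : 0 < 2 * (d : ℝ) / (p + 1) + 2 - (d : ℝ) := by
    rcases hdd3 with h | h
    · rw [h]
      have h4 : (0 : ℝ) < 4 / (p + 1) := by positivity
      have : 2 * (2 : ℝ) / (p + 1) = 4 / (p + 1) := by ring
      linarith [this ▸ h4]
    · have hlt : p < ((d : ℝ) + 2) / ((d : ℝ) - 2) := by
        rcases hp2 with h2 | h2
        · exfalso; rw [h2] at h; norm_num at h
        · exact h2
      have hpd : p * ((d : ℝ) - 2) < (d : ℝ) + 2 :=
        (lt_div_iff₀ (by linarith)).mp hlt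
      have : (d : ℝ) - 2 < 2 * (d : ℝ) / (p + 1) := by
        rw [lt_div_iff₀ hP1]
        nlinarith
      linarith
  have hpd4 : (d : ℝ) + 4 < p * (d : ℝ) := by
    have : (4 : ℝ) / (d : ℝ) < p - 1 := by linarith
    have := (div_lt_iff₀ hdpos).mp this
    nlinarith
  have hA2 : 0 < (d : ℝ) / (1 + 2 / (d : ℝ)) - 2 * (d : ℝ) / (p + 1) := by
    have he : (d : ℝ) / (1 + 2 / (d : ℝ)) = (d : ℝ) ^ 2 / ((d : ℝ) + 2) := by
      rw [div_eq_div_iff (by positivity) (by linarith)]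
      field_simp
    rw [he, sub_pos, div_lt_div_iff₀ hP1 (by linarith)]
    nlinarith
  have hA3 : 2 * (d : ℝ) / (p + 1) - (d : ℝ) < 0 := by
    have : 2 * (d : ℝ) / (p + 1) < (d : ℝ) := by
      rw [div_lt_iff₀ hP1]
      nlinarith
    linarith
  -- conclude
  have hsum : 0 < (2 * (d : ℝ) / (p + 1) + 2 - (d : ℝ)) * K
      + ((d : ℝ) / (1 + 2 / (d : ℝ)) - 2 * (d : ℝ) / (p + 1)) * B :=
    add_pos_of_nonneg_of_pos (mul_nonneg hA1.le hK0) (mul_pos hA2 hBpos)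
  have hA3' : 0 < -(2 * (d : ℝ) / (p + 1) - (d : ℝ)) := by linarith
  have key : (-(2 * (d : ℝ) / (p + 1) - (d : ℝ))) * (ω * M)
      = (2 * (d : ℝ) / (p + 1) + 2 - (d : ℝ)) * K
        + ((d : ℝ) / (1 + 2 / (d : ℝ)) - 2 * (d : ℝ) / (p + 1)) * B := by
    linear_combination -poho1
  have hωM : 0 < ω * M := by
    by_contra h
    push_neg at h
    have h2 := mul_nonpos_of_nonneg_of_nonpos hA3'.le h
    rw [key] at h2
    linarith
  by_contra hω
  push_neg at hω
  have : ω * M ≤ 0 := mul_nonpos_of_nonpos_of_nonneg hω hM0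
  linarith
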